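/- arXiv:1606.01026 — 3 statements merged into one kernel-verified Lean document; each statement's English description precedes it below -/
import Mathlib

section
/- Every idempotent element of the gossip monoid G_n is symmetric: if A is a product of call matrices and A² = A, then Aᵀ = A. -/
namespace Gossip

variable {n : ℕ}

/-- Boolean matrix multiplication over the semiring ({0,1}, max, min). -/
def bmul (A B : Matrix (Fin n) (Fin n) Bool) : Matrix (Fin n) (Fin n) Bool :=
  fun i j => decide (∃ k, A i k = true ∧ B k j = true)

/-- The identity boolean matrix. -/
def idm : Matrix (Fin n) (Fin n) Bool := fun a b => decide (a = b)

/-- The call matrix C[i,j]. -/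
def call (i j : Fin n) : Matrix (Fin n) (Fin n) Bool :=
  fun a b => decide (a = b ∨ (a = i ∧ b = j) ∨ (a = j ∧ b = i))

/-- Product of a list of boolean matrices (empty product is the identity). -/
def prodList : List (Matrix (Fin n) (Fin n) Bool) → Matrix (Fin n) (Fin n) Bool
  | [] => idm
  | M :: L => bmul M (prodList L)

/-- Membership in the gossip monoid `G_n`: a product of call matrices. -/
def InGossip (A : Matrix (Fin n) (Fin n) Bool) : Prop :=
  ∃ L : List (Fin n × Fin n), (∀ p ∈ L, p.1 ≠ p.2) ∧
    A = prodList (L.map fun p => call p.1 p.2)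

/-- Entrywise order on boolean matrices. -/
def ble (A B : Matrix (Fin n) (Fin n) Bool) : Prop :=
  ∀ i j, A i j = true → B i j = true

lemma bmul_mono {A A' B B' : Matrix (Fin n) (Fin n) Bool}
    (hA : ble A A') (hB : ble B B') : ble (bmul A B) (bmul A' B') := by
  intro i j h
  simp only [bmul, decide_eq_true_eq] at h ⊢
  obtain ⟨k, h1, h2⟩ := h
  exact ⟨k, hA _ _ h1, hB _ _ h2⟩

lemma bmul_idm_left (A : Matrix (Fin n) (Fin n) Bool) : bmul idm A = A := by
  funext i j
  have h : (∃ k, idm i k = true ∧ A k j = true) ↔ A i j = true := by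
    constructor
    · rintro ⟨k, hk, h⟩
      simp only [idm, decide_eq_true_eq] at hk
      subst hk; exact h
    · intro h; exact ⟨i, by simp [idm], h⟩
  simp [bmul, h]

lemma bmul_idm_right (A : Matrix (Fin n) (Fin n) Bool) : bmul A idm = A := by
  funext i j
  have h : (∃ k, A i k = true ∧ idm k j = true) ↔ A i j = true := by
    constructor
    · rintro ⟨k, hk, h⟩
      simp only [idm, decide_eq_true_eq] at h
      subst h; exact hk
    · intro h; exact ⟨j, h, by simp [idm]⟩
  simp [bmul, h]

lemma bmul_assoc (A B C : Matrix (Fin n) (Fin n) Bool) :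
    bmul (bmul A B) C = bmul A (bmul B C) := by
  funext i j
  simp only [bmul, decide_eq_true_eq]
  refine decide_eq_decide.mpr (Iff.trans ?_ (exists_congr fun _ => and_congr_right' decide_eq_true_iff).symm)
  constructor
  · rintro ⟨k, ⟨m, h1, h2⟩, h3⟩; exact ⟨m, h1, k, h2, h3⟩
  · rintro ⟨m, h1, k, h2, h3⟩; exact ⟨k, ⟨m, h1, h2⟩, h3⟩

lemma prodList_append (L1 L2 : List (Matrix (Fin n) (Fin n) Bool)) :
    prodList (L1 ++ L2) = bmul (prodList L1) (prodList L2) := by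
  induction L1 with
  | nil => simp [prodList, bmul_idm_left]
  | cons M L ih => simp [prodList, ih, bmul_assoc]

lemma transpose_bmul (A B : Matrix (Fin n) (Fin n) Bool) :
    (bmul A B).transpose = bmul B.transpose A.transpose := by
  funext i j
  simp only [bmul, Matrix.transpose_apply]
  refine decide_eq_decide.mpr ?_
  constructor
  · rintro ⟨k, h1, h2⟩; exact ⟨k, h2, h1⟩
  · rintro ⟨k, h1, h2⟩; exact ⟨k, h2, h1⟩

lemma transpose_idm : (idm : Matrix (Fin n) (Fin n) Bool).transpose = idm := by
  funext i j
  simp only [idm, Matrix.transpose_apply]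
  simp only [decide_eq_decide]
  exact eq_comm

lemma transpose_call (i j : Fin n) : (call i j).transpose = call i j := by
  funext a b
  simp only [call, Matrix.transpose_apply]
  simp only [decide_eq_decide]
  constructor <;> (rintro (rfl | ⟨rfl, rfl⟩ | ⟨rfl, rfl⟩) <;> tauto)

lemma transpose_prodList (L : List (Matrix (Fin n) (Fin n) Bool))
    (h : ∀ M ∈ L, M.transpose = M) :
    (prodList L).transpose = prodList L.reverse := by
  induction L with
  | nil => simpa [prodList] using transpose_idm
  | cons M L ih =>
    have hM : M.transpose = M := h M (by simp)
    simp only [prodList, transpose_bmul, List.reverse_cons, prodList_append, hM]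
    rw [ih (fun N hN => h N (by simp [hN]))]
    simp [prodList, bmul_idm_right]

lemma idm_le_call (i j : Fin n) : ble idm (call i j) := by
  intro a b h
  simp only [idm, decide_eq_true_eq] at h
  simp [call, h]

lemma idm_le_bmul {A B : Matrix (Fin n) (Fin n) Bool}
    (hA : ble idm A) (hB : ble idm B) : ble idm (bmul A B) := by
  intro i j h
  simp only [idm, decide_eq_true_eq] at h
  subst h
  simp only [bmul, decide_eq_true_eq]
  exact ⟨i, hA i i (by simp [idm]), hB i i (by simp [idm])⟩

lemma idm_le_prodList (L : List (Matrix (Fin n) (Fin n) Bool))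
    (h : ∀ M ∈ L, ble idm M) : ble idm (prodList L) := by
  induction L with
  | nil => intro i j hh; exact hh
  | cons M L ih =>
    exact idm_le_bmul (h M (by simp)) (ih fun N hN => h N (by simp [hN]))

lemma mem_le_prodList (L : List (Matrix (Fin n) (Fin n) Bool))
    (h : ∀ M ∈ L, ble idm M) {M : Matrix (Fin n) (Fin n) Bool} (hM : M ∈ L) :
    ble M (prodList L) := by
  induction L with
  | nil => cases hM
  | cons N L ih =>
    rcases List.mem_cons.mp hM with rfl | hM'
    · have : ble (bmul M idm) (bmul M (prodList L)) :=
        bmul_mono (fun _ _ hh => hh)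
          (idm_le_prodList L fun N hN => h N (by simp [hN]))
      rw [bmul_idm_right] at this
      exact this
    · have h1 : ble (prodList L) (prodList (N :: L)) := by
        have : ble (bmul idm (prodList L)) (bmul N (prodList L)) :=
          bmul_mono (h N (by simp)) (fun _ _ hh => hh)
        rw [bmul_idm_left] at this
        exact this
      exact fun i j hh => h1 i j (ih (fun P hP => h P (by simp [hP])) hM' i j hh)

lemma prodList_le {A : Matrix (Fin n) (Fin n) Bool}
    (hI : ble idm A) (hidem : bmul A A = A)
    (L : List (Matrix (Fin n) (Fin n) Bool)) (h : ∀ M ∈ L, ble M A) :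
    ble (prodList L) A := by
  induction L with
  | nil => exact hI
  | cons M L ih =>
    intro i j hh
    have := bmul_mono (h M (by simp)) (ih fun N hN => h N (by simp [hN])) i j hh
    rwa [hidem] at this

theorem stmt_11 (A : Matrix (Fin n) (Fin n) Bool) (hA : InGossip A)
    (hidem : bmul A A = A) : A.transpose = A := by
  obtain ⟨L, -, rfl⟩ := hA
  set Ms := L.map fun p => call p.1 p.2 with hMs
  have hsym : ∀ M ∈ Ms, M.transpose = M := by
    intro M hM
    simp only [hMs, List.mem_map] at hM
    obtain ⟨p, -, rfl⟩ := hM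
    exact transpose_call _ _
  have hge : ∀ M ∈ Ms, ble idm M := by
    intro M hM
    simp only [hMs, List.mem_map] at hM
    obtain ⟨p, -, rfl⟩ := hM
    exact idm_le_call _ _
  have hI : ble idm (prodList Ms) := idm_le_prodList Ms hge
  have hTle : ble (prodList Ms).transpose (prodList Ms) := by
    rw [transpose_prodList Ms hsym]
    exact prodList_le hI hidem Ms.reverse
      (fun M hM => mem_le_prodList Ms hge (List.mem_reverse.mp hM))
  funext i j
  have h1 := hTle i j
  have h2 := hTle j i
  simp only [Matrix.transpose_apply] at h1 h2 ⊢
  by_cases h : prodList Ms j i = true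
  · simp [h, h1 h]
  · simp only [Bool.not_eq_true] at h
    rw [h]
    by_cases h' : prodList Ms i j = true
    · exact absurd (h2 h') (by simp [h])
    · simpa using h'
end Gossip
end

section
/- An element A of the gossip monoid G_n is idempotent if and only if the relation i ~ j ⟺ a_{i,j} = 1 is an equivalence relation on {1,…,n}. -/
namespace Gossip

variable {n : ℕ}

lemma call_diag (i j a : Fin n) : call i j a a = true := by
  simp [call]

lemma call_symm {i j a b : Fin n} (h : call i j a b = true) : call i j b a = true := by
  simp only [call, decide_eq_true_eq] at h ⊢
  tauto

lemma prod_refl (L : List (Fin n × Fin n)) (a : Fin n) :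
    prodList (L.map fun p => call p.1 p.2) a a = true := by
  induction L with
  | nil => simp [prodList, idm]
  | cons q L ih =>
      simp only [List.map_cons, prodList, bmul, decide_eq_true_eq]
      exact ⟨a, call_diag _ _ _, ih⟩

lemma mem_le (L : List (Fin n × Fin n)) {p : Fin n × Fin n} (hp : p ∈ L)
    {a b : Fin n} (h : call p.1 p.2 a b = true) :
    prodList (L.map fun p => call p.1 p.2) a b = true := by
  induction L with
  | nil => exact absurd hp List.not_mem_nil
  | cons q L ih =>
      simp only [List.map_cons, prodList, bmul, decide_eq_true_eq]
      rcases List.mem_cons.mp hp with h1 | h1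
      · subst h1
        exact ⟨b, h, prod_refl L b⟩
      · exact ⟨a, call_diag _ _ _, ih h1⟩

lemma path (L : List (Fin n × Fin n)) (i j : Fin n)
    (h : prodList (L.map fun p => call p.1 p.2) i j = true) :
    Relation.ReflTransGen (fun a b => ∃ p ∈ L, call p.1 p.2 a b = true) j i := by
  induction L generalizing i with
  | nil =>
      simp only [List.map_nil, prodList, idm, decide_eq_true_eq] at h
      subst h
      exact Relation.ReflTransGen.refl
  | cons q L ih =>
      simp only [List.map_cons, prodList, bmul, decide_eq_true_eq] at h
      obtain ⟨k, hik, hkj⟩ := h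
      have hmono : ∀ a b : Fin n, (∃ p ∈ L, call p.1 p.2 a b = true) →
          (∃ p ∈ q :: L, call p.1 p.2 a b = true) :=
        fun a b ⟨p, h1, h2⟩ => ⟨p, List.mem_cons_of_mem q h1, h2⟩
      have hchain := Relation.ReflTransGen.mono hmono _ _ (ih k hkj)
      exact hchain.tail ⟨q, List.mem_cons_self, call_symm hik⟩

theorem stmt_12 (A : Matrix (Fin n) (Fin n) Bool) (hA : InGossip A) :
    bmul A A = A ↔ Equivalence (fun i j => A i j = true) := by
  obtain ⟨L, -, rfl⟩ := hA
  set A := prodList (L.map fun p => call p.1 p.2) with hAdef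
  constructor
  · intro hAA
    have htrans : ∀ {a b c : Fin n}, A a b = true → A b c = true → A a c = true := by
      intro a b c h1 h2
      have : bmul A A a c = true := by
        simp only [bmul, decide_eq_true_eq]
        exact ⟨b, h1, h2⟩
      rwa [hAA] at this
    refine ⟨fun a => prod_refl L a, ?_, htrans⟩
    · intro i j hij
      have hchain := path L i j hij
      clear hij
      induction hchain with
      | refl => exact prod_refl L j
      | tail hbc hcd ih =>
          obtain ⟨p, hpL, hc⟩ := hcd
          exact htrans ih (mem_le L hpL hc)
  · intro he
    funext i j
    cases h : A i j with
    | true =>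
        simp only [bmul, decide_eq_true_eq]
        exact ⟨i, he.refl i, h⟩
    | false =>
        simp only [bmul, decide_eq_false_iff_not]
        rintro ⟨k, h1, h2⟩
        have := he.trans h1 h2
        rw [h] at this
        exact Bool.noConfusion this
end Gossip
end

section
/- Green's relation J is trivial on the gossip monoid G_n: if A, B ∈ G_n and there exist U, V, X, Y ∈ G_n with A = UBV and B = XAY, then A = B. -/
namespace Gossip

variable {n : ℕ}

lemma refl_prodList (L : List (Matrix (Fin n) (Fin n) Bool))
    (h : ∀ M ∈ L, ∀ i, M i i = true) : ∀ i, prodList L i i = true := by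
  induction L with
  | nil => intro i; simp [prodList, idm]
  | cons M L ih =>
    intro i
    simp only [prodList, bmul, decide_eq_true_eq]
    exact ⟨i, h M List.mem_cons_self i,
      ih (fun N hN => h N (List.mem_cons_of_mem _ hN)) i⟩

lemma refl_of_gossip {M : Matrix (Fin n) (Fin n) Bool} (h : InGossip M) :
    ∀ i, M i i = true := by
  obtain ⟨L, -, rfl⟩ := h
  apply refl_prodList
  intro N hN i
  simp only [List.mem_map] at hN
  obtain ⟨p, -, rfl⟩ := hN
  simp [call]

lemma le_sandwich {U B V : Matrix (Fin n) (Fin n) Bool}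
    (hU : ∀ i, U i i = true) (hV : ∀ i, V i i = true) {i j : Fin n}
    (hB : B i j = true) : bmul U (bmul B V) i j = true := by
  simp only [bmul, decide_eq_true_eq]
  exact decide_eq_true ⟨i, hU i, decide_eq_true ⟨j, hB, hV j⟩⟩

theorem stmt_19 (A B U V X Y : Matrix (Fin n) (Fin n) Bool)
    (hA : InGossip A) (hB : InGossip B) (hU : InGossip U) (hV : InGossip V)
    (hX : InGossip X) (hY : InGossip Y)
    (h1 : A = bmul U (bmul B V)) (h2 : B = bmul X (bmul A Y)) :
    A = B := by
  funext i j
  have hBA : B i j = true → A i j = true := fun h =>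
    h1 ▸ le_sandwich (refl_of_gossip hU) (refl_of_gossip hV) h
  have hAB : A i j = true → B i j = true := fun h =>
    h2 ▸ le_sandwich (refl_of_gossip hX) (refl_of_gossip hY) h
  cases hb : B i j with
  | true => exact hBA hb
  | false =>
    cases ha : A i j with
    | true => exact (hb ▸ hAB ha).symm
    | false => rfl
end Gossip
end
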